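/- Let (G,X,H) be an uncolorable degree-feasible configuration. Then for every vertex v ∈ V(G) there is an independent set T in H with |T ∩ X_u| = 1 for all u ∈ V(G) \ {v}. -/

import Mathlib

open Finset

noncomputable section
open scoped Classical

structure HGraph (α : Type) where
  verts : Finset α
  edges : Finset ℕ
  inc : ℕ → Finset α
  inc_sub : ∀ e ∈ edges, inc e ⊆ verts
  inc_card : ∀ e ∈ edges, 2 ≤ (inc e).card

variable {α β : Type} [DecidableEq α] [DecidableEq β]

namespace HGraph

def degree (G : HGraph α) (v : α) : ℕ :=
  (G.edges.filter (fun e => v ∈ G.inc e)).card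

def maxDegree (G : HGraph α) : ℕ := G.verts.sup G.degree

def mult (G : HGraph α) (u v : α) : ℕ :=
  (G.edges.filter (fun e => G.inc e = {u, v})).card

def Adj (G : HGraph α) (u v : α) : Prop :=
  u ≠ v ∧ ∃ e ∈ G.edges, u ∈ G.inc e ∧ v ∈ G.inc e

def Connected (G : HGraph α) : Prop :=
  ∀ u ∈ G.verts, ∀ v ∈ G.verts, Relation.ReflTransGen G.Adj u v

def IndepSet (H : HGraph β) (S : Finset β) : Prop :=
  ∀ e ∈ H.edges, ¬ H.inc e ⊆ S

def eraseEdge (H : HGraph β) (e₀ : ℕ) : HGraph β where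
  verts := H.verts
  edges := H.edges.erase e₀
  inc := H.inc
  inc_sub := fun e he => H.inc_sub e (Finset.mem_of_mem_erase he)
  inc_card := fun e he => H.inc_card e (Finset.mem_of_mem_erase he)

def induce (G : HGraph α) (S : Finset α) : HGraph α where
  verts := S
  edges := G.edges.filter (fun e => G.inc e ⊆ S)
  inc := G.inc
  inc_sub := fun e he => (Finset.mem_filter.mp he).2
  inc_card := fun e he => G.inc_card e (Finset.mem_filter.mp he).1

def IsSub (G' G : HGraph α) : Prop :=
  G'.verts ⊆ G.verts ∧ G'.edges ⊆ G.edges ∧ ∀ e ∈ G'.edges, G'.inc e = G.inc e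

def shrink (G : HGraph α) (v : α) : HGraph α where
  verts := G.verts.erase v
  edges := G.edges.filter (fun e => 2 ≤ ((G.inc e).erase v).card)
  inc := fun e => (G.inc e).erase v
  inc_sub := by
    intro e he y hy
    rw [Finset.mem_erase] at hy ⊢
    exact ⟨hy.1, G.inc_sub e (Finset.mem_filter.mp he).1 hy.2⟩
  inc_card := fun e he => (Finset.mem_filter.mp he).2

def nbhd (H : HGraph β) (x : β) : Finset β :=
  H.verts.filter (fun y => ∃ e ∈ H.edges, H.inc e = {x, y})

def numComponents (G : HGraph α) : ℕ :=
  (G.verts.image (fun v => G.verts.filter (fun u => Relation.ReflTransGen G.Adj v u))).card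

def IsBridge (G : HGraph α) (e : ℕ) : Prop :=
  numComponents (G.eraseEdge e) = numComponents G + ((G.inc e).card - 1)

def IsSepVertex (G : HGraph α) (v : α) : Prop :=
  ∃ A B : Finset α, A ∪ B = G.verts ∧ A ∩ B = {v} ∧ 2 ≤ A.card ∧ 2 ≤ B.card ∧
    ∀ e ∈ G.edges, G.inc e ⊆ A ∨ G.inc e ⊆ B

def IsBlock (G : HGraph α) (S : Finset α) : Prop :=
  S ⊆ G.verts ∧ (G.induce S).Connected ∧ (∀ v, ¬ IsSepVertex (G.induce S) v) ∧
    ∀ S' : Finset α, S ⊆ S' → S' ⊆ G.verts → (G.induce S').Connected →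
      (∀ v, ¬ IsSepVertex (G.induce S') v) → S' = S

end HGraph

open HGraph

def IsCover (G : HGraph α) (X : α → Finset β) (H : HGraph β) : Prop :=
  (∀ u ∈ G.verts, ∀ v ∈ G.verts, u ≠ v → Disjoint (X u) (X v)) ∧
  H.verts = G.verts.biUnion X ∧
  (∀ v ∈ G.verts, H.IndepSet (X v)) ∧
  ∃ M : ℕ → Finset ℕ,
    (∀ e ∈ G.edges,
      M e ⊆ H.edges ∧
      (∀ e' ∈ M e, (∀ v ∈ G.inc e, (H.inc e' ∩ X v).card = 1) ∧
        H.inc e' ⊆ (G.inc e).biUnion X) ∧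
      ∀ e₁ ∈ M e, ∀ e₂ ∈ M e, e₁ ≠ e₂ → Disjoint (H.inc e₁) (H.inc e₂)) ∧
    H.edges = G.edges.biUnion M

def HasIT (H : HGraph β) (Vs : Finset α) (X : α → Finset β) : Prop :=
  ∃ T : Finset β, H.IndepSet T ∧ ∀ v ∈ Vs, (T ∩ X v).card = 1

def MinUncol (H : HGraph β) (Vs : Finset α) (X : α → Finset β) : Prop :=
  ¬ HasIT H Vs X ∧ ∀ e ∈ H.edges, HasIT (H.eraseEdge e) Vs X

def DPColorableAt (G : HGraph α) (k : ℕ) : Prop :=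
  ∀ (X : α → Finset ℕ) (H : HGraph ℕ),
    IsCover G X H → (∀ v ∈ G.verts, k ≤ (X v).card) → HasIT H G.verts X

def chiDP (G : HGraph α) : ℕ := sInf {k | DPColorableAt G k}

def DPDegreeColorable (G : HGraph α) : Prop :=
  ∀ (X : α → Finset ℕ) (H : HGraph ℕ),
    IsCover G X H → (∀ v ∈ G.verts, G.degree v ≤ (X v).card) → HasIT H G.verts X

def colNum (G : HGraph α) : ℕ :=
  sInf {k | ∀ G' : HGraph α, G'.IsSub G → G'.verts.Nonempty →
    ∃ v ∈ G'.verts, G'.degree v ≤ k}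

def ProperColoring (G : HGraph α) (φ : α → ℕ) : Prop :=
  ∀ e ∈ G.edges, ∃ u ∈ G.inc e, ∃ v ∈ G.inc e, φ u ≠ φ v

def LColorable (G : HGraph α) (L : α → Finset ℕ) : Prop :=
  ∃ φ : α → ℕ, ProperColoring G φ ∧ ∀ v ∈ G.verts, φ v ∈ L v

def chiList (G : HGraph α) : ℕ :=
  sInf {k | ∀ L : α → Finset ℕ, (∀ v ∈ G.verts, k ≤ (L v).card) → LColorable G L}

def IsTKn (B : HGraph α) (t n : ℕ) : Prop :=
  1 ≤ n ∧ B.verts.card = n ∧ (∀ e ∈ B.edges, (B.inc e).card = 2) ∧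
  ∀ u ∈ B.verts, ∀ v ∈ B.verts, u ≠ v → B.mult u v = t

def IsTCn (B : HGraph α) (t n : ℕ) : Prop :=
  3 ≤ n ∧ B.verts.card = n ∧ (∀ e ∈ B.edges, (B.inc e).card = 2) ∧
  ∃ f : ℕ → α,
    B.verts = (Finset.range n).image f ∧
    (∀ i < n, ∀ j < n, i ≠ j → f i ≠ f j) ∧
    ∀ i < n, ∀ j < n, i ≠ j →
      B.mult (f i) (f j) = if j = (i + 1) % n ∨ i = (j + 1) % n then t else 0

def IsDPHyperbrick (B : HGraph α) : Prop :=
  (∃ t n, 1 ≤ t ∧ 1 ≤ n ∧ IsTKn B t n) ∨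
  (∃ t n, 1 ≤ t ∧ 3 ≤ n ∧ IsTCn B t n) ∨
  (∃ e ∈ B.edges, B.verts = B.inc e ∧ B.edges = {e})

def AdjPair (G : HGraph α) (u v : α) : Prop :=
  u ≠ v ∧ ∃ e ∈ G.edges, G.inc e = {u, v}

def IsKConfig (G : HGraph α) (X : α → Finset β) (H : HGraph β) (t n : ℕ) : Prop :=
  1 ≤ t ∧ 1 ≤ n ∧ IsTKn G t n ∧ IsCover G X H ∧
  ∃ P : α → ℕ → Finset β,
    (∀ v ∈ G.verts, ∀ i ∈ Finset.range (n - 1), ∀ j ∈ Finset.range (n - 1),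
      i ≠ j → Disjoint (P v i) (P v j)) ∧
    (∀ v ∈ G.verts, X v = (Finset.range (n - 1)).biUnion (P v)) ∧
    (∀ v ∈ G.verts, ∀ i ∈ Finset.range (n - 1), (P v i).card = t) ∧
    (∀ i ∈ Finset.range (n - 1), ∀ u ∈ G.verts, ∀ v ∈ G.verts, u ≠ v →
      ∀ x ∈ P u i, ∀ y ∈ P v i, ∃ e ∈ H.edges, H.inc e = {x, y}) ∧
    (∀ e ∈ H.edges, ∃ i ∈ Finset.range (n - 1), ∃ u ∈ G.verts, ∃ v ∈ G.verts,
      u ≠ v ∧ ∃ x ∈ P u i, ∃ y ∈ P v i, H.inc e = {x, y})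

def IsOddCConfig (G : HGraph α) (X : α → Finset β) (H : HGraph β) (t n : ℕ) : Prop :=
  1 ≤ t ∧ 5 ≤ n ∧ Odd n ∧ IsTCn G t n ∧ IsCover G X H ∧
  ∃ P : α → ℕ → Finset β,
    (∀ v ∈ G.verts, Disjoint (P v 0) (P v 1)) ∧
    (∀ v ∈ G.verts, X v = P v 0 ∪ P v 1) ∧
    (∀ v ∈ G.verts, (P v 0).card = t ∧ (P v 1).card = t) ∧
    (∀ i ∈ ({0, 1} : Finset ℕ), ∀ u ∈ G.verts, ∀ v ∈ G.verts, AdjPair G u v →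
      ∀ x ∈ P u i, ∀ y ∈ P v i, ∃ e ∈ H.edges, H.inc e = {x, y}) ∧
    (∀ e ∈ H.edges, ∃ i ∈ ({0, 1} : Finset ℕ), ∃ u ∈ G.verts, ∃ v ∈ G.verts,
      AdjPair G u v ∧ ∃ x ∈ P u i, ∃ y ∈ P v i, H.inc e = {x, y})

def IsEvenCConfig (G : HGraph α) (X : α → Finset β) (H : HGraph β) (t n : ℕ) : Prop :=
  1 ≤ t ∧ 4 ≤ n ∧ Even n ∧ IsTCn G t n ∧ IsCover G X H ∧
  ∃ P : α → ℕ → Finset β, ∃ w w' : α, w ∈ G.verts ∧ w' ∈ G.verts ∧ AdjPair G w w' ∧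
    (∀ v ∈ G.verts, Disjoint (P v 0) (P v 1)) ∧
    (∀ v ∈ G.verts, X v = P v 0 ∪ P v 1) ∧
    (∀ v ∈ G.verts, (P v 0).card = t ∧ (P v 1).card = t) ∧
    (∀ i ∈ ({0, 1} : Finset ℕ), ∀ u ∈ G.verts, ∀ v ∈ G.verts, AdjPair G u v →
      ({u, v} : Finset α) ≠ {w, w'} →
      ∀ x ∈ P u i, ∀ y ∈ P v i, ∃ e ∈ H.edges, H.inc e = {x, y}) ∧
    (∀ x ∈ P w 0, ∀ y ∈ P w' 1, ∃ e ∈ H.edges, H.inc e = {x, y}) ∧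
    (∀ x ∈ P w 1, ∀ y ∈ P w' 0, ∃ e ∈ H.edges, H.inc e = {x, y}) ∧
    (∀ e ∈ H.edges, ∃ x y : β, H.inc e = {x, y} ∧
      ((∃ i ∈ ({0, 1} : Finset ℕ), ∃ u ∈ G.verts, ∃ v ∈ G.verts,
        AdjPair G u v ∧ ({u, v} : Finset α) ≠ {w, w'} ∧ x ∈ P u i ∧ y ∈ P v i) ∨
       (x ∈ P w 0 ∧ y ∈ P w' 1) ∨ (x ∈ P w 1 ∧ y ∈ P w' 0)))

def IsEConfig (G : HGraph α) (X : α → Finset β) (H : HGraph β) : Prop :=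
  (∃ e₀ ∈ G.edges, G.edges = {e₀} ∧ G.verts = G.inc e₀) ∧
  IsCover G X H ∧ (∀ v ∈ G.verts, (X v).card = 1) ∧
  ∃ e₁ ∈ H.edges, H.edges = {e₁} ∧ H.inc e₁ = G.verts.biUnion X

def IsMergeOf (G : HGraph α) (X : α → Finset β) (H : HGraph β)
    (G₁ : HGraph α) (X₁ : α → Finset β) (H₁ : HGraph β)
    (G₂ : HGraph α) (X₂ : α → Finset β) (H₂ : HGraph β)
    (v₁ v₂ vs : α) : Prop :=
  Disjoint G₁.verts G₂.verts ∧ Disjoint G₁.edges G₂.edges ∧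
  Disjoint H₁.verts H₂.verts ∧ Disjoint H₁.edges H₂.edges ∧
  v₁ ∈ G₁.verts ∧ v₂ ∈ G₂.verts ∧ vs ∉ G₁.verts ∪ G₂.verts ∧
  G.verts = insert vs (((G₁.verts ∪ G₂.verts).erase v₁).erase v₂) ∧
  G.edges = G₁.edges ∪ G₂.edges ∧
  (∀ e ∈ G₁.edges, G.inc e =
    if v₁ ∈ G₁.inc e then insert vs ((G₁.inc e).erase v₁) else G₁.inc e) ∧
  (∀ e ∈ G₂.edges, G.inc e =
    if v₂ ∈ G₂.inc e then insert vs ((G₂.inc e).erase v₂) else G₂.inc e) ∧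
  H.verts = H₁.verts ∪ H₂.verts ∧ H.edges = H₁.edges ∪ H₂.edges ∧
  (∀ e ∈ H₁.edges, H.inc e = H₁.inc e) ∧ (∀ e ∈ H₂.edges, H.inc e = H₂.inc e) ∧
  X vs = X₁ v₁ ∪ X₂ v₂ ∧
  (∀ u ∈ G₁.verts.erase v₁, X u = X₁ u) ∧ (∀ u ∈ G₂.verts.erase v₂, X u = X₂ u)

inductive Constructible : HGraph α → (α → Finset β) → HGraph β → Prop where
  | K : ∀ {G : HGraph α} {X : α → Finset β} {H : HGraph β} {t n : ℕ},
      IsKConfig G X H t n → Constructible G X H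
  | Codd : ∀ {G : HGraph α} {X : α → Finset β} {H : HGraph β} {t n : ℕ},
      IsOddCConfig G X H t n → Constructible G X H
  | Ceven : ∀ {G : HGraph α} {X : α → Finset β} {H : HGraph β} {t n : ℕ},
      IsEvenCConfig G X H t n → Constructible G X H
  | E : ∀ {G : HGraph α} {X : α → Finset β} {H : HGraph β},
      IsEConfig G X H → Constructible G X H
  | merge : ∀ {G G₁ G₂ : HGraph α} {X X₁ X₂ : α → Finset β} {H H₁ H₂ : HGraph β}
      {v₁ v₂ vs : α},
      Constructible G₁ X₁ H₁ → Constructible G₂ X₂ H₂ →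
      IsMergeOf G X H G₁ X₁ H₁ G₂ X₂ H₂ v₁ v₂ vs → Constructible G X H

def reducedVerts (G : HGraph α) (X : α → Finset β) (H : HGraph β)
    (v : α) (x : β) : Finset β :=
  (G.shrink v).verts.biUnion (fun u => X u \ H.nbhd x)

def reduceH (G : HGraph α) (X : α → Finset β) (H : HGraph β)
    (v : α) (x : β) : HGraph β where
  verts := reducedVerts G X H v x
  edges := H.edges.filter (fun e =>
    2 ≤ ((H.inc e).erase x).card ∧ (H.inc e).erase x ⊆ reducedVerts G X H v x)
  inc := fun e => (H.inc e).erase x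
  inc_sub := fun e he => (Finset.mem_filter.mp he).2.2
  inc_card := fun e he => (Finset.mem_filter.mp he).2.1

/-- Auxiliary: a reflexive-transitive chain yields an indexed path. -/
lemma exists_chain_aux {γ : Type} {r : γ → γ → Prop} {u w : γ}
    (h : Relation.ReflTransGen r u w) :
    ∃ n : ℕ, ∃ f : ℕ → γ, f 0 = u ∧ f n = w ∧ ∀ i < n, r (f i) (f (i + 1)) := by
  induction h with
  | refl => exact ⟨0, fun _ => u, rfl, rfl, fun i hi => absurd hi (Nat.not_lt_zero i)⟩
  | @tail b c hub hbc ih =>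
    obtain ⟨n, f, h0, hn, hs⟩ := ih
    refine ⟨n + 1, fun i => if i ≤ n then f i else c, by simp [h0], by simp, ?_⟩
    intro i hi
    rcases Nat.lt_or_ge i n with h1 | h1
    · simp only [if_pos (Nat.le_of_lt h1), if_pos (Nat.succ_le_of_lt h1)]
      exact hs i h1
    · have hin : i = n := by omega
      subst hin
      simp only [if_pos (le_refl i), if_neg (by omega : ¬ i + 1 ≤ i)]
      rw [hn]; exact hbc

/-- There is a chain of length `n` from `u` to `v` in `G`. -/
def chainTo {γ : Type} (G : HGraph γ) (v u : γ) (n : ℕ) : Prop :=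
  ∃ f : ℕ → γ, f 0 = u ∧ f n = v ∧ ∀ i < n, G.Adj (f i) (f (i + 1))

/-- Distance to `v` (0 if unreachable). -/
def distTo {γ : Type} (G : HGraph γ) (v u : γ) : ℕ :=
  if h : ∃ n, chainTo G v u n then Nat.find h else 0

lemma distTo_le {γ : Type} {G : HGraph γ} {v u : γ} {n : ℕ} (h : chainTo G v u n) :
    distTo G v u ≤ n := by
  rw [distTo, dif_pos ⟨n, h⟩]
  exact Nat.find_le h

lemma distTo_spec {γ : Type} {G : HGraph γ} {v u : γ} (h : ∃ n, chainTo G v u n) :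
    chainTo G v u (distTo G v u) := by
  rw [distTo, dif_pos h]
  exact Nat.find_spec h

lemma distTo_self {γ : Type} (G : HGraph γ) (v : γ) : distTo G v v = 0 :=
  Nat.le_zero.mp (distTo_le ⟨fun _ => v, rfl, rfl, fun i hi => absurd hi (Nat.not_lt_zero i)⟩)

lemma distTo_step {γ : Type} {G : HGraph γ} {v u : γ}
    (h : ∃ n, chainTo G v u n) (hne : u ≠ v) :
    ∃ u', G.Adj u u' ∧ distTo G v u' < distTo G v u := by
  obtain ⟨f, h0, hn, hs⟩ := distTo_spec h
  have hm0 : distTo G v u ≠ 0 := by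
    intro h'
    rw [h'] at hn
    exact hne (h0.symm.trans hn)
  have hpos : 0 < distTo G v u := Nat.pos_of_ne_zero hm0
  refine ⟨f 1, by rw [← h0]; exact hs 0 hpos, ?_⟩
  have hchain : chainTo G v (f 1) (distTo G v u - 1) := by
    refine ⟨fun i => f (i + 1), rfl, ?_, fun i hi => hs (i + 1) (by omega)⟩
    show f (distTo G v u - 1 + 1) = v
    rw [Nat.sub_add_cancel hpos]
    exact hn
  have hle := distTo_le hchain
  omega

/-- in an uncolorable degree-feasible configuration, for every vertex v
there is an independent set of H meeting X_u exactly once for all u ≠ v. -/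
theorem uncolorable_almost_transversal (G : HGraph α) (X : α → Finset β) (H : HGraph β)
    (hG : G.Connected) (hC : IsCover G X H)
    (hdf : ∀ v ∈ G.verts, G.degree v ≤ (X v).card)
    (hunc : ¬ HasIT H G.verts X) :
    ∀ v ∈ G.verts, ∃ T : Finset β, H.IndepSet T ∧
      ∀ u ∈ G.verts, u ≠ v → (T ∩ X u).card = 1 := by
  obtain ⟨hdisj, hHverts, hindepX, M, hM, hHedges⟩ := hC
  intro v hv
  have hexists : ∀ u ∈ G.verts, ∃ n, chainTo G v u n := by
    intro u hu
    obtain ⟨n, f, h0, hn, hs⟩ := exists_chain_aux (hG u hu v hv)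
    exact ⟨n, f, h0, hn, hs⟩
  have step : ∀ u ∈ G.verts, u ≠ v → ∃ u', u' ∈ G.verts ∧ distTo G v u' < distTo G v u ∧
      ∃ e ∈ G.edges, u ∈ G.inc e ∧ u' ∈ G.inc e ∧ u ≠ u' := by
    intro u hu hne
    obtain ⟨u', hadj, hlt⟩ := distTo_step (hexists u hu) hne
    obtain ⟨hneu, e, he, h1, h2⟩ := hadj
    exact ⟨u', G.inc_sub e he h2, hlt, e, he, h1, h2, hneu⟩
  have key : ∀ n : ℕ, ∀ R : Finset α, (G.verts \ R).card ≤ n → R ⊆ G.verts → v ∈ R →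
      (∀ u ∈ G.verts, ∀ w ∈ R, distTo G v u < distTo G v w → u ∈ R) →
      ∃ T : Finset β, H.IndepSet T ∧ T ⊆ (G.verts \ R).biUnion X ∧
        ∀ u ∈ G.verts \ R, (T ∩ X u).card = 1 := by
    intro n
    induction n with
    | zero =>
      intro R hcard _ _ _
      have hempty : G.verts \ R = ∅ := Finset.card_eq_zero.mp (Nat.le_zero.mp hcard)
      refine ⟨∅, ?_, by simp, by simp [hempty]⟩
      intro e he hsub
      have h2 := H.inc_card e he
      have h0 : (H.inc e).card = 0 := by
        rw [Finset.card_eq_zero]; exact Finset.subset_empty.mp hsub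
      omega
    | succ n ih =>
      intro R hcard hRsub hvR hinv
      by_cases hne : (G.verts \ R).Nonempty
      · obtain ⟨w, hwmem, hwmin⟩ := Finset.exists_min_image (G.verts \ R) (distTo G v) hne
        obtain ⟨hwV, hwR⟩ := Finset.mem_sdiff.mp hwmem
        have hwv : w ≠ v := fun h => hwR (h ▸ hvR)
        have hinv' : ∀ u ∈ G.verts, ∀ w' ∈ insert w R, distTo G v u < distTo G v w' →
            u ∈ insert w R := by
          intro u hu w' hw' hlt
          rcases Finset.mem_insert.mp hw' with h | h
          · subst h
            by_cases huR : u ∈ R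
            · exact Finset.mem_insert_of_mem huR
            · exact absurd (hwmin u (Finset.mem_sdiff.mpr ⟨hu, huR⟩)) (by omega)
          · exact Finset.mem_insert_of_mem (hinv u hu w' h hlt)
        have hR'sub : insert w R ⊆ G.verts := Finset.insert_subset hwV hRsub
        have hcard' : (G.verts \ insert w R).card ≤ n := by
          have hEq : G.verts \ insert w R = (G.verts \ R).erase w := by
            ext a
            simp only [Finset.mem_sdiff, Finset.mem_erase, Finset.mem_insert]
            tauto
          rw [hEq, Finset.card_erase_of_mem hwmem]
          omega
        obtain ⟨T', hT'ind, hT'sub, hT'card⟩ := ih (insert w R) hcard' hR'sub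
          (Finset.mem_insert_of_mem hvR) hinv'
        have hTempty : ∀ u ∈ insert w R, T' ∩ X u = ∅ := by
          intro u hu
          rw [Finset.eq_empty_iff_forall_notMem]
          intro t ht
          obtain ⟨ht1, ht2⟩ := Finset.mem_inter.mp ht
          obtain ⟨u', hu', htu'⟩ := Finset.mem_biUnion.mp (hT'sub ht1)
          obtain ⟨hu'V, hu'R⟩ := Finset.mem_sdiff.mp hu'
          have hne2 : u' ≠ u := fun h => hu'R (h ▸ hu)
          exact Finset.disjoint_left.mp (hdisj u' hu'V u (hR'sub hu) hne2) htu' ht2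
        have hTle : ∀ u ∈ G.verts, (T' ∩ X u).card ≤ 1 := by
          intro u hu
          by_cases h : u ∈ insert w R
          · rw [hTempty u h]; simp
          · exact le_of_eq (hT'card u (Finset.mem_sdiff.mpr ⟨hu, h⟩))
        obtain ⟨u₀, hu₀V, hdu₀, e₀, he₀, hwe₀, hu₀e₀, hwu₀⟩ := step w hwV hwv
        have hu₀R' : u₀ ∈ insert w R := by
          by_cases h : u₀ ∈ R
          · exact Finset.mem_insert_of_mem h
          · exact absurd (hwmin u₀ (Finset.mem_sdiff.mpr ⟨hu₀V, h⟩)) (by omega)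
        -- bad colors
        set Bad := (X w).filter (fun x => ∃ e' ∈ H.edges, H.inc e' ⊆ insert x T')
          with hBadDef
        have hB : ∀ x ∈ Bad, ∃ e, e ∈ G.edges ∧ w ∈ G.inc e ∧ e ≠ e₀ ∧
            ∃ e' ∈ M e, x ∈ H.inc e' ∧ H.inc e' ⊆ insert x T' := by
          intro x hx
          rw [hBadDef, Finset.mem_filter] at hx
          obtain ⟨hxw, e', he', hsub⟩ := hx
          have he'' : e' ∈ G.edges.biUnion M := by rw [← hHedges]; exact he'
          obtain ⟨e, he, he'M⟩ := Finset.mem_biUnion.mp he''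
          have hxe' : x ∈ H.inc e' := by
            by_contra hxe'
            apply hT'ind e' he'
            intro y hy
            rcases Finset.mem_insert.mp (hsub hy) with h | h
            · exact absurd (h ▸ hy) hxe'
            · exact h
          obtain ⟨hMsub, hMprop, hMdisj⟩ := hM e he
          obtain ⟨hcard1, hsubU⟩ := hMprop e' he'M
          obtain ⟨u'', hu''e, hxu''⟩ := Finset.mem_biUnion.mp (hsubU hxe')
          have hu''V : u'' ∈ G.verts := G.inc_sub e he hu''e
          have hww : u'' = w := by
            by_contra hne2
            exact Finset.disjoint_left.mp (hdisj u'' hu''V w hwV hne2) hxu'' hxw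
          have hwe : w ∈ G.inc e := hww ▸ hu''e
          have hee₀ : e ≠ e₀ := by
            intro heq
            subst heq
            obtain ⟨y, hy⟩ := Finset.card_eq_one.mp (hcard1 u₀ hu₀e₀)
            have hy1 : y ∈ H.inc e' ∩ X u₀ := hy ▸ Finset.mem_singleton_self y
            obtain ⟨hy2, hy3⟩ := Finset.mem_inter.mp hy1
            rcases Finset.mem_insert.mp (hsub hy2) with h | h
            · subst h
              exact Finset.disjoint_left.mp (hdisj w hwV u₀ hu₀V hwu₀) hxw hy3
            · have hyT : y ∈ T' ∩ X u₀ := Finset.mem_inter.mpr ⟨h, hy3⟩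
              rw [hTempty u₀ hu₀R'] at hyT
              exact absurd hyT (Finset.notMem_empty y)
          exact ⟨e, he, hwe, hee₀, e', he'M, hxe', hsub⟩
        have hcardBad : Bad.card ≤ ((G.edges.filter (fun e => w ∈ G.inc e)).erase e₀).card := by
          classical
          set Q : β → ℕ → Prop := fun x e => e ∈ G.edges ∧ w ∈ G.inc e ∧ e ≠ e₀ ∧
            ∃ e' ∈ M e, x ∈ H.inc e' ∧ H.inc e' ⊆ insert x T' with hQ
          have hBQ : ∀ x ∈ Bad, ∃ e, Q x e := fun x hx => hB x hx
          set F : β → ℕ := fun x => if h : ∃ e, Q x e then h.choose else 0 with hF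
          have hFmem : ∀ x (h : ∃ e, Q x e), F x = h.choose := by
            intro x h
            rw [hF]
            exact dif_pos h
          apply Finset.card_le_card_of_injOn F
          · intro x hx
            have h : ∃ e, Q x e := hBQ x hx
            have hq := h.choose_spec
            rw [hFmem x h]
            exact Finset.mem_erase.mpr ⟨hq.2.2.1, Finset.mem_filter.mpr ⟨hq.1, hq.2.1⟩⟩
          · intro x₁ hx₁' x₂ hx₂' hFeq
            by_contra hne2
            have hx₁ : x₁ ∈ Bad := hx₁'
            have hx₂ : x₂ ∈ Bad := hx₂'
            have hx1w : x₁ ∈ X w := Finset.mem_of_mem_filter x₁ (by rw [hBadDef] at hx₁; exact hx₁)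
            have hx2w : x₂ ∈ X w := Finset.mem_of_mem_filter x₂ (by rw [hBadDef] at hx₂; exact hx₂)
            have h1 : ∃ e, Q x₁ e := hBQ x₁ hx₁
            have h2 : ∃ e, Q x₂ e := hBQ x₂ hx₂
            have hq1 := h1.choose_spec
            have hq2 := h2.choose_spec
            have heq2 : h1.choose = h2.choose := by
              rw [← hFmem x₁ h1, ← hFmem x₂ h2, hFeq]
            obtain ⟨heG, hwe, _, e'₁, he'₁M, hx1e, hsub1⟩ := hq1
            rw [← heq2] at hq2
            obtain ⟨_, _, _, e'₂, he'₂M, hx2e, hsub2⟩ := hq2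
            obtain ⟨hMsub, hMprop, hMdisj⟩ := hM h1.choose heG
            have he'ne : e'₁ ≠ e'₂ := by
              intro h
              subst h
              rcases Finset.mem_insert.mp (hsub1 hx2e) with h | h
              · exact hne2 h.symm
              · have h4 : x₂ ∈ T' ∩ X w := Finset.mem_inter.mpr ⟨h, hx2w⟩
                rw [hTempty w (Finset.mem_insert_self w R)] at h4
                exact absurd h4 (Finset.notMem_empty x₂)
            obtain ⟨u₁, hu₁e, hu₁w⟩ := Finset.exists_mem_ne (s := G.inc h1.choose)
              (by have := G.inc_card h1.choose heG; omega) w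
            have hu₁V : u₁ ∈ G.verts := G.inc_sub h1.choose heG hu₁e
            obtain ⟨y₁, hy₁⟩ := Finset.card_eq_one.mp ((hMprop e'₁ he'₁M).1 u₁ hu₁e)
            obtain ⟨y₂, hy₂⟩ := Finset.card_eq_one.mp ((hMprop e'₂ he'₂M).1 u₁ hu₁e)
            have hy₁m : y₁ ∈ H.inc e'₁ ∩ X u₁ := hy₁ ▸ Finset.mem_singleton_self y₁
            have hy₂m : y₂ ∈ H.inc e'₂ ∩ X u₁ := hy₂ ▸ Finset.mem_singleton_self y₂
            obtain ⟨hy₁e, hy₁X⟩ := Finset.mem_inter.mp hy₁m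
            obtain ⟨hy₂e, hy₂X⟩ := Finset.mem_inter.mp hy₂m
            have hdisj1 := hdisj w hwV u₁ hu₁V (Ne.symm hu₁w)
            have hy₁T : y₁ ∈ T' := by
              rcases Finset.mem_insert.mp (hsub1 hy₁e) with h | h
              · subst h
                exact absurd hy₁X (Finset.disjoint_left.mp hdisj1 hx1w)
              · exact h
            have hy₂T : y₂ ∈ T' := by
              rcases Finset.mem_insert.mp (hsub2 hy₂e) with h | h
              · subst h
                exact absurd hy₂X (Finset.disjoint_left.mp hdisj1 hx2w)
              · exact h
            have hyeq : y₁ = y₂ := by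
              by_contra hne3
              have hlt : 1 < (T' ∩ X u₁).card := Finset.one_lt_card.mpr
                ⟨y₁, Finset.mem_inter.mpr ⟨hy₁T, hy₁X⟩,
                 y₂, Finset.mem_inter.mpr ⟨hy₂T, hy₂X⟩, hne3⟩
              have hle := hTle u₁ hu₁V
              omega
            subst hyeq
            exact Finset.disjoint_left.mp (hMdisj e'₁ he'₁M e'₂ he'₂M he'ne) hy₁e hy₂e
        have hdeg : e₀ ∈ G.edges.filter (fun e => w ∈ G.inc e) :=
          Finset.mem_filter.mpr ⟨he₀, hwe₀⟩
        have hBadlt : Bad.card < (X w).card := by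
          rw [Finset.card_erase_of_mem hdeg] at hcardBad
          have h2 : 1 ≤ (G.edges.filter (fun e => w ∈ G.inc e)).card :=
            Finset.card_pos.mpr ⟨e₀, hdeg⟩
          have h3 : (G.edges.filter (fun e => w ∈ G.inc e)).card ≤ (X w).card := hdf w hwV
          omega
        have hxex : ∃ x ∈ X w, x ∉ Bad := by
          by_contra h
          push_neg at h
          have hsub : X w ⊆ Bad := h
          have := Finset.card_le_card hsub
          omega
        obtain ⟨x, hxX, hxBad⟩ := hxex
        have hxgood : ¬ ∃ e' ∈ H.edges, H.inc e' ⊆ insert x T' := by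
          intro h
          exact hxBad (by rw [hBadDef]; exact Finset.mem_filter.mpr ⟨hxX, h⟩)
        refine ⟨insert x T', ?_, ?_, ?_⟩
        · intro e' he' hsub
          exact hxgood ⟨e', he', hsub⟩
        · intro t ht
          rcases Finset.mem_insert.mp ht with h | h
          · subst h
            exact Finset.mem_biUnion.mpr ⟨w, hwmem, hxX⟩
          · obtain ⟨u', hu', htu'⟩ := Finset.mem_biUnion.mp (hT'sub h)
            obtain ⟨h1, h2⟩ := Finset.mem_sdiff.mp hu'
            exact Finset.mem_biUnion.mpr
              ⟨u', Finset.mem_sdiff.mpr ⟨h1, fun hc => h2 (Finset.mem_insert_of_mem hc)⟩, htu'⟩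
        · intro u hu
          obtain ⟨huV, huR⟩ := Finset.mem_sdiff.mp hu
          by_cases hcase : u = w
          · subst hcase
            rw [Finset.insert_inter_of_mem hxX, hTempty u (Finset.mem_insert_self u R)]
            simp
          · have huR' : u ∉ insert w R := by
              intro hc
              rcases Finset.mem_insert.mp hc with h | h
              · exact hcase h
              · exact huR h
            have hxnot : x ∉ X u := fun hc =>
              Finset.disjoint_left.mp (hdisj w hwV u huV (fun h => hcase h.symm)) hxX hc
            rw [Finset.insert_inter_of_notMem hxnot]
            exact hT'card u (Finset.mem_sdiff.mpr ⟨huV, huR'⟩)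
      · have hempty : G.verts \ R = ∅ := Finset.not_nonempty_iff_eq_empty.mp hne
        exact ih R (by rw [hempty]; simp) hRsub hvR hinv
  obtain ⟨T, hTind, _, hTcard⟩ := key G.verts.card {v}
    (Finset.card_le_card (Finset.sdiff_subset))
    (Finset.singleton_subset_iff.mpr hv) (Finset.mem_singleton_self v)
    (by
      intro u hu w hw hlt
      rw [Finset.mem_singleton.mp hw, distTo_self] at hlt
      exact absurd hlt (Nat.not_lt_zero _))
  exact ⟨T, hTind, fun u hu hne =>
    hTcard u (Finset.mem_sdiff.mpr ⟨hu, fun h => hne (Finset.mem_singleton.mp h)⟩)⟩
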